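/- arXiv:2103.14735 — 2 statements merged into one kernel-verified Lean document; each statement's English description precedes it below -/
import Mathlib

section
/- For p ≥ 2 and vectors a, b ∈ ℝ^n, the monotonicity inequality (|a|^{p−2} a − |b|^{p−2} b) · (a − b) ≥ 0 holds; in fact (|a|^{p−2} a − |b|^{p−2} b) · (a − b) ≥ 2^{2−p} |a − b|^p. -/
open Real Set

private lemma rpow_sub_one_mul {p : ℝ} (hp : 1 ≤ p) {s : ℝ} (hs : 0 ≤ s) :
    s ^ (p - 1) * s = s ^ p := by
  rcases eq_or_lt_of_le hs with h | h
  · rw [← h, mul_zero, Real.zero_rpow (by linarith)]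
  · rw [← Real.rpow_add_one (ne_of_gt h) (p - 1)]
    congr 1
    ring

private lemma rpow_sub_two_mul {p : ℝ} (hp : 2 ≤ p) {s : ℝ} (hs : 0 ≤ s) :
    s ^ (p - 2) * s = s ^ (p - 1) := by
  rcases eq_or_lt_of_le hs with h | h
  · rw [← h, mul_zero, Real.zero_rpow (by linarith)]
  · rw [← Real.rpow_add_one (ne_of_gt h) (p - 2)]
    congr 1
    ring

private lemma sq_rpow_half {x : ℝ} (hx : 0 ≤ x) (p : ℝ) : (x ^ 2) ^ (p / 2) = x ^ p := by
  rw [← Real.rpow_natCast x 2, ← Real.rpow_mul hx]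
  congr 1
  ring

/-- superadditivity: x^q + y^q ≤ (x+y)^q for q ≥ 1, x y ≥ 0 -/
private lemma rpow_superadd {q : ℝ} (hq : 1 ≤ q) {x y : ℝ} (hx : 0 ≤ x) (hy : 0 ≤ y) :
    x ^ q + y ^ q ≤ (x + y) ^ q := by
  have hxy : 0 ≤ x + y := by linarith
  have hx1 : x ^ q ≤ (x + y) ^ (q - 1) * x := by
    rw [← rpow_sub_one_mul hq hx]
    exact mul_le_mul_of_nonneg_right
      (Real.rpow_le_rpow hx (by linarith) (by linarith)) hx
  have hy1 : y ^ q ≤ (x + y) ^ (q - 1) * y := by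
    rw [← rpow_sub_one_mul hq hy]
    exact mul_le_mul_of_nonneg_right
      (Real.rpow_le_rpow hy (by linarith) (by linarith)) hy
  calc x ^ q + y ^ q ≤ (x + y) ^ (q - 1) * (x + y) := by linarith
  _ = (x + y) ^ q := rpow_sub_one_mul hq hxy

private lemma E1 {p : ℝ} (hp : 2 ≤ p) {s t : ℝ} (hs : 0 ≤ s) (ht : 0 ≤ t) :
    (2:ℝ) ^ (2 - p) * (s + t) ^ p ≤ (s + t) * (s ^ (p - 1) + t ^ (p - 1)) := by
  have hq : (1:ℝ) ≤ p - 1 := by linarith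
  have hst : (0:ℝ) ≤ s + t := by linarith
  have conv := (convexOn_rpow hq).2 (mem_Ici.mpr hs) (mem_Ici.mpr ht)
    (by norm_num : (0:ℝ) ≤ 1/2) (by norm_num : (0:ℝ) ≤ 1/2) (by norm_num)
  simp only [smul_eq_mul] at conv
  rw [show (1/2:ℝ) * s + (1/2:ℝ) * t = (1/2) * (s + t) by ring,
    Real.mul_rpow (by norm_num) hst] at conv
  set P : ℝ := (2:ℝ) ^ (p - 1) with hPdef
  have hP : 0 < P := Real.rpow_pos_of_pos (by norm_num) _
  have hA : ((1:ℝ)/2) ^ (p - 1) * P = 1 := by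
    rw [hPdef, ← Real.mul_rpow (by norm_num) (by norm_num)]
    norm_num
  have hB : (2:ℝ) ^ (2 - p) * P = 2 := by
    rw [hPdef, ← Real.rpow_add (by norm_num : (0:ℝ) < 2)]
    norm_num
  have hhalf : ((1:ℝ)/2) ^ (p - 1) = 1 / P := by
    field_simp
    linarith [hA]
  have htwop : (2:ℝ) ^ (2 - p) = 2 / P := by
    field_simp
    linarith [hB]
  rw [hhalf] at conv
  rw [htwop, ← rpow_sub_one_mul (by linarith : (1:ℝ) ≤ p) hst]
  have conv2 : (s + t) ^ (p - 1) ≤ P * (1/2 * s ^ (p - 1) + 1/2 * t ^ (p - 1)) := by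
    have h := mul_le_mul_of_nonneg_left conv hP.le
    calc (s + t) ^ (p - 1) = P * (1 / P * (s + t) ^ (p - 1)) := by
          field_simp
      _ ≤ P * (1/2 * s ^ (p - 1) + 1/2 * t ^ (p - 1)) := h
  rw [div_mul_eq_mul_div, div_le_iff₀ hP]
  nlinarith [mul_le_mul_of_nonneg_left conv2 hst]

private lemma E0 {p : ℝ} (hp : 2 ≤ p) {s t : ℝ} (ht : 0 ≤ t) (hts : t ≤ s) :
    (2:ℝ) ^ (2 - p) * (s - t) ^ p ≤ (s - t) * (s ^ (p - 1) - t ^ (p - 1)) := by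
  have hst : (0:ℝ) ≤ s - t := by linarith
  have hsup := rpow_superadd (q := p - 1) (by linarith) hst ht
  rw [show s - t + t = s by ring] at hsup
  have h3 : (s - t) ^ (p - 1) ≤ s ^ (p - 1) - t ^ (p - 1) := by linarith
  have h1 : (2:ℝ) ^ (2 - p) ≤ 1 :=
    Real.rpow_le_one_of_one_le_of_nonpos (by norm_num) (by linarith)
  have hXnn : (0:ℝ) ≤ (s - t) ^ (p - 1) := Real.rpow_nonneg hst _
  rw [← rpow_sub_one_mul (by linarith : (1:ℝ) ≤ p) hst]
  nlinarith [mul_le_mul_of_nonneg_right h1 (mul_nonneg hXnn hst),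
    mul_le_mul_of_nonneg_right h3 hst]

private lemma affine_ge_convex {f : ℝ → ℝ} (hf : ConvexOn ℝ (Ici 0) f)
    {m k u0 u1 u : ℝ} (h0 : 0 ≤ u0) (hu : u0 ≤ u) (hu1 : u ≤ u1)
    (he0 : f u0 ≤ k + m * u0) (he1 : f u1 ≤ k + m * u1) :
    f u ≤ k + m * u := by
  rcases eq_or_lt_of_le (le_trans hu hu1) with heq | hlt
  · have h00 : u = u0 := le_antisymm (heq ▸ hu1) hu
    rw [h00]; exact he0
  · have hd : (0:ℝ) < u1 - u0 := by linarith
    have hw1 : (0:ℝ) ≤ (u1 - u) / (u1 - u0) := div_nonneg (by linarith) (by linarith)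
    have hw2 : (0:ℝ) ≤ (u - u0) / (u1 - u0) := div_nonneg (by linarith) (by linarith)
    have hsum : (u1 - u) / (u1 - u0) + (u - u0) / (u1 - u0) = 1 := by
      field_simp
      ring
    have hcomb : (u1 - u) / (u1 - u0) * u0 + (u - u0) / (u1 - u0) * u1 = u := by
      field_simp
      ring
    have h1 : (0:ℝ) ≤ u1 := by linarith
    have := hf.2 (mem_Ici.mpr h0) (mem_Ici.mpr h1) hw1 hw2 hsum
    simp only [smul_eq_mul] at this
    rw [hcomb] at this
    have hcal : (u1 - u) / (u1 - u0) * (k + m * u0) + (u - u0) / (u1 - u0) * (k + m * u1)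
        = k + m * u := by
      field_simp
      ring
    calc f u ≤ (u1 - u) / (u1 - u0) * f u0 + (u - u0) / (u1 - u0) * f u1 := this
      _ ≤ (u1 - u) / (u1 - u0) * (k + m * u0) + (u - u0) / (u1 - u0) * (k + m * u1) := by
          gcongr
      _ = k + m * u := hcal

/-- key scalar inequality, assuming t ≤ s -/
private lemma key' {p : ℝ} (hp : 2 ≤ p) {s t c : ℝ} (ht : 0 ≤ t)
    (hts : t ≤ s) (hc : |c| ≤ s * t) :
    (2:ℝ) ^ (2 - p) * (s ^ 2 + t ^ 2 - 2 * c) ^ (p / 2) ≤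
      s ^ (p - 2) * s ^ 2 + t ^ (p - 2) * t ^ 2 - (s ^ (p - 2) + t ^ (p - 2)) * c := by
  have hs : (0:ℝ) ≤ s := le_trans ht hts
  have hcc := abs_le.mp hc
  have hAs : s ^ (p - 2) * s = s ^ (p - 1) := rpow_sub_two_mul hp hs
  have hBt : t ^ (p - 2) * t = t ^ (p - 1) := rpow_sub_two_mul hp ht
  have hf : ConvexOn ℝ (Ici 0) (fun u : ℝ => (2:ℝ) ^ (2 - p) * u ^ (p / 2)) := by
    have h := convexOn_rpow (p := p / 2) (by linarith)
    have h2 := h.smul (Real.rpow_nonneg (by norm_num : (0:ℝ) ≤ 2) (2 - p))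
    simpa [smul_eq_mul] using h2
  have he1 : (2:ℝ) ^ (2 - p) * ((s + t) ^ 2) ^ (p / 2) ≤
      (s ^ (p - 2) - t ^ (p - 2)) * (s ^ 2 - t ^ 2) / 2 +
        (s ^ (p - 2) + t ^ (p - 2)) / 2 * (s + t) ^ 2 := by
    rw [sq_rpow_half (by linarith : (0:ℝ) ≤ s + t) p]
    have hg : (s ^ (p - 2) - t ^ (p - 2)) * (s ^ 2 - t ^ 2) / 2 +
        (s ^ (p - 2) + t ^ (p - 2)) / 2 * (s + t) ^ 2
        = (s + t) * (s ^ (p - 1) + t ^ (p - 1)) := by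
      rw [← hAs, ← hBt]; ring
    rw [hg]
    exact E1 hp hs ht
  have he0 : (2:ℝ) ^ (2 - p) * ((s - t) ^ 2) ^ (p / 2) ≤
      (s ^ (p - 2) - t ^ (p - 2)) * (s ^ 2 - t ^ 2) / 2 +
        (s ^ (p - 2) + t ^ (p - 2)) / 2 * (s - t) ^ 2 := by
    rw [sq_rpow_half (by linarith : (0:ℝ) ≤ s - t) p]
    have hg : (s ^ (p - 2) - t ^ (p - 2)) * (s ^ 2 - t ^ 2) / 2 +
        (s ^ (p - 2) + t ^ (p - 2)) / 2 * (s - t) ^ 2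
        = (s - t) * (s ^ (p - 1) - t ^ (p - 1)) := by
      rw [← hAs, ← hBt]; ring
    rw [hg]
    exact E0 hp ht hts
  have hmain := affine_ge_convex hf (by positivity : (0:ℝ) ≤ (s - t) ^ 2)
    (by nlinarith [hcc.2] : (s - t) ^ 2 ≤ s ^ 2 + t ^ 2 - 2 * c)
    (by nlinarith [hcc.1] : s ^ 2 + t ^ 2 - 2 * c ≤ (s + t) ^ 2) he0 he1
  calc (2:ℝ) ^ (2 - p) * (s ^ 2 + t ^ 2 - 2 * c) ^ (p / 2)
      ≤ (s ^ (p - 2) - t ^ (p - 2)) * (s ^ 2 - t ^ 2) / 2 +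
        (s ^ (p - 2) + t ^ (p - 2)) / 2 * (s ^ 2 + t ^ 2 - 2 * c) := hmain
    _ = s ^ (p - 2) * s ^ 2 + t ^ (p - 2) * t ^ 2 - (s ^ (p - 2) + t ^ (p - 2)) * c := by
        ring

private lemma key {p : ℝ} (hp : 2 ≤ p) {s t c : ℝ} (hs : 0 ≤ s) (ht : 0 ≤ t)
    (hc : |c| ≤ s * t) :
    (2:ℝ) ^ (2 - p) * (s ^ 2 + t ^ 2 - 2 * c) ^ (p / 2) ≤
      s ^ (p - 2) * s ^ 2 + t ^ (p - 2) * t ^ 2 - (s ^ (p - 2) + t ^ (p - 2)) * c := by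
  rcases le_total t s with h | h
  · exact key' hp ht h hc
  · have h2 := key' hp hs h (by rwa [mul_comm] at hc)
    rw [show s ^ 2 + t ^ 2 - 2 * c = t ^ 2 + s ^ 2 - 2 * c by ring]
    linarith

theorem pLaplace_monotonicity (n : ℕ) (p : ℝ) (hp : 2 ≤ p)
    (a b : EuclideanSpace ℝ (Fin n)) :
    (0 : ℝ) ≤ inner ℝ (‖a‖ ^ (p - 2) • a - ‖b‖ ^ (p - 2) • b) (a - b) ∧
    (2 : ℝ) ^ (2 - p) * ‖a - b‖ ^ p ≤
      (inner ℝ (‖a‖ ^ (p - 2) • a - ‖b‖ ^ (p - 2) • b) (a - b) : ℝ) := by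
  have hinner : (inner ℝ (‖a‖ ^ (p - 2) • a - ‖b‖ ^ (p - 2) • b) (a - b) : ℝ) =
      ‖a‖ ^ (p - 2) * ‖a‖ ^ 2 + ‖b‖ ^ (p - 2) * ‖b‖ ^ 2 -
        (‖a‖ ^ (p - 2) + ‖b‖ ^ (p - 2)) * (inner ℝ a b : ℝ) := by
    simp only [inner_sub_left, inner_sub_right, real_inner_smul_left,
      real_inner_self_eq_norm_sq, real_inner_comm b a]
    ring
  have hnorm : ‖a - b‖ ^ p =
      (‖a‖ ^ 2 + ‖b‖ ^ 2 - 2 * (inner ℝ a b : ℝ)) ^ (p / 2) := by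
    rw [← sq_rpow_half (norm_nonneg (a - b)) p, norm_sub_sq_real]
    congr 1
    ring
  have hmain := key hp (norm_nonneg a) (norm_nonneg b) (abs_real_inner_le_norm a b)
  rw [hinner, hnorm]
  have hbase : (0:ℝ) ≤ ‖a‖ ^ 2 + ‖b‖ ^ 2 - 2 * (inner ℝ a b : ℝ) := by
    have h := norm_sub_sq_real a b
    nlinarith [sq_nonneg ‖a - b‖]
  constructor
  · refine le_trans ?_ hmain
    exact mul_nonneg (Real.rpow_nonneg (by norm_num) _) (Real.rpow_nonneg hbase _)
  · exact hmain
end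

section
/- For p ≥ 2 and vectors a, b ∈ ℝ^n, one has | |a|^{p−2} a − |b|^{p−2} b | ≤ (p−1) (|a| + |b|)^{p−2} |a − b|. -/
lemma aux_rpow_key (q s t : ℝ) (hq : 0 ≤ q) (ht : 0 ≤ t) (hts : t ≤ s) :
    t * (s ^ q - t ^ q) ≤ q * (s + t) ^ q * (s - t) := by
  have hs0 : 0 ≤ s := le_trans ht hts
  rcases eq_or_lt_of_le ht with h0 | h0
  · rw [← h0, zero_mul]
    have h1 : (0:ℝ) ≤ (s + 0) ^ q := Real.rpow_nonneg (by linarith) q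
    exact mul_nonneg (mul_nonneg hq h1) (by linarith)
  rcases eq_or_lt_of_le hts with hst | hst
  · rw [hst]
    simp
  have hs : 0 < s := lt_trans h0 hst
  obtain ⟨c, hc, hceq⟩ := exists_hasDerivAt_eq_slope (fun x => x ^ q)
    (fun x => q * x ^ (q - 1)) hst
    (fun x hx => (Real.continuousAt_rpow_const x q
      (Or.inl (ne_of_gt (lt_of_lt_of_le h0 hx.1)))).continuousWithinAt)
    (fun x hx => Real.hasDerivAt_rpow_const (Or.inl (ne_of_gt (lt_trans h0 hx.1))))
  have hc0 : 0 < c := lt_trans h0 hc.1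
  have heq : s ^ q - t ^ q = q * c ^ (q - 1) * (s - t) := by
    have hne : s - t ≠ 0 := by linarith
    exact (div_eq_iff hne).mp hceq.symm
  rw [heq]
  have h1 : t * c ^ (q - 1) ≤ (s + t) ^ q := by
    calc t * c ^ (q - 1) ≤ c * c ^ (q - 1) := by
          apply mul_le_mul_of_nonneg_right (le_of_lt hc.1)
          positivity
      _ = c ^ q := by
          rw [mul_comm, ← Real.rpow_add_one (ne_of_gt hc0), sub_add_cancel]
      _ ≤ (s + t) ^ q := Real.rpow_le_rpow (le_of_lt hc0) (by linarith [hc.2]) hq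
  calc t * (q * c ^ (q - 1) * (s - t)) = q * (t * c ^ (q - 1)) * (s - t) := by ring
    _ ≤ q * (s + t) ^ q * (s - t) := by
        apply mul_le_mul_of_nonneg_right _ (by linarith)
        exact mul_le_mul_of_nonneg_left h1 hq

theorem pLaplace_flux_local_lipschitz (n : ℕ) (p : ℝ) (hp : 2 ≤ p)
    (a b : EuclideanSpace ℝ (Fin n)) :
    ‖(‖a‖ ^ (p - 2) • a - ‖b‖ ^ (p - 2) • b : EuclideanSpace ℝ (Fin n))‖ ≤
      (p - 1) * (‖a‖ + ‖b‖) ^ (p - 2) * ‖a - b‖ := by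
  wlog hba : ‖b‖ ≤ ‖a‖ with H
  · have := H n p hp b a (le_of_not_ge hba)
    rw [← norm_neg] at this
    simp only [neg_sub] at this
    calc ‖(‖a‖ ^ (p - 2) • a - ‖b‖ ^ (p - 2) • b : EuclideanSpace ℝ (Fin n))‖
        ≤ (p - 1) * (‖b‖ + ‖a‖) ^ (p - 2) * ‖b - a‖ := this
      _ = (p - 1) * (‖a‖ + ‖b‖) ^ (p - 2) * ‖a - b‖ := by
          rw [add_comm, norm_sub_rev]
  set q := p - 2 with hqdef
  have hq : 0 ≤ q := by linarith
  have ht : (0:ℝ) ≤ ‖b‖ := norm_nonneg b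
  have hdecomp : (‖a‖ ^ q • a - ‖b‖ ^ q • b : EuclideanSpace ℝ (Fin n))
      = ‖a‖ ^ q • (a - b) + (‖a‖ ^ q - ‖b‖ ^ q) • b := by
    rw [smul_sub, sub_smul]; abel
  have hmono : ‖b‖ ^ q ≤ ‖a‖ ^ q := Real.rpow_le_rpow ht hba hq
  have hkey := aux_rpow_key q ‖a‖ ‖b‖ hq ht hba
  have hnn : ‖a‖ - ‖b‖ ≤ ‖a - b‖ := norm_sub_norm_le a b
  have hx : (0:ℝ) ≤ (‖a‖ + ‖b‖) ^ q := Real.rpow_nonneg (by positivity) q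
  calc ‖(‖a‖ ^ q • a - ‖b‖ ^ q • b : EuclideanSpace ℝ (Fin n))‖
      ≤ ‖(‖a‖ ^ q • (a - b) : EuclideanSpace ℝ (Fin n))‖
        + ‖((‖a‖ ^ q - ‖b‖ ^ q) • b : EuclideanSpace ℝ (Fin n))‖ := by
        rw [hdecomp]; exact norm_add_le _ _
    _ = ‖a‖ ^ q * ‖a - b‖ + (‖a‖ ^ q - ‖b‖ ^ q) * ‖b‖ := by
        rw [norm_smul, norm_smul, Real.norm_eq_abs, Real.norm_eq_abs,
          abs_of_nonneg (Real.rpow_nonneg (norm_nonneg a) q),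
          abs_of_nonneg (by linarith)]
    _ ≤ (‖a‖ + ‖b‖) ^ q * ‖a - b‖ + q * (‖a‖ + ‖b‖) ^ q * (‖a‖ - ‖b‖) := by
        apply add_le_add
        · exact mul_le_mul_of_nonneg_right
            (Real.rpow_le_rpow (norm_nonneg a) (by linarith) hq) (norm_nonneg _)
        · linarith [hkey]
    _ ≤ (‖a‖ + ‖b‖) ^ q * ‖a - b‖ + q * (‖a‖ + ‖b‖) ^ q * ‖a - b‖ := by
        apply add_le_add_right
        exact mul_le_mul_of_nonneg_left hnn (by positivity)
    _ = (p - 1) * (‖a‖ + ‖b‖) ^ q * ‖a - b‖ := by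
        have hp1 : p - 1 = q + 1 := by rw [hqdef]; ring
        rw [hp1]; ring
end
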